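/- Let W = (W_1,...,W_r) be finite disjoint vertex sets. There exists N = N(W) such that every irreducible K_r-divisible multigraph on W has edge multiplicity at most N. -/

import Mathlib

open Finset

/-- A multigraph (given by its multiplicity function `μ`) on the vertex classes
`W 0, ..., W (r-1)` is `K_r`-divisible if every vertex outside two classes has the same
total multiplicity of edges into each of them. -/
def MGDivisible {β : Type*} [Fintype β] {r : ℕ} (W : Fin r → Finset β) (μ : β → β → ℕ) : Prop :=
  ∀ j₁ j₂ : Fin r, ∀ v : β, v ∉ W j₁ → v ∉ W j₂ →
    (∑ w ∈ W j₁, μ v w) = ∑ w ∈ W j₂, μ v w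

/-- A `K_r`-divisible multigraph is irreducible if it has no non-trivial proper
`K_r`-divisible submultigraph. -/
def MGIrreducible {β : Type*} [Fintype β] {r : ℕ} (W : Fin r → Finset β) (μ : β → β → ℕ) : Prop :=
  ∀ ν : β → β → ℕ, (∀ a b, ν a b ≤ μ a b) → (∀ a b, ν a b = ν b a) →
    MGDivisible W ν → (∃ a b, ν a b ≠ 0) → ν = μ

/-- For fixed disjoint vertex classes `W = (W 1, ..., W r)` there exists `N = N(W)` such that
every irreducible `K_r`-divisible multigraph on `W` has edge multiplicity at most `N`. -/
theorem stmt4 {β : Type*} [Fintype β] [DecidableEq β] {r : ℕ} (W : Fin r → Finset β)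
    (hdisj : ∀ j₁ j₂ : Fin r, j₁ ≠ j₂ → Disjoint (W j₁) (W j₂)) :
    ∃ N : ℕ, ∀ μ : β → β → ℕ,
      (∀ a b, μ a b = μ b a) → (∀ a, μ a a = 0) →
      (∀ a b, μ a b ≠ 0 → ∃ j₁ j₂ : Fin r, j₁ ≠ j₂ ∧ a ∈ W j₁ ∧ b ∈ W j₂) →
      MGDivisible W μ → MGIrreducible W μ →
      ∀ a b, μ a b ≤ N := by
  classical
  by_contra hcon
  push_neg at hcon
  have key : ∀ N : ℕ, ∃ μ : β → β → ℕ, (∀ a b, μ a b = μ b a) ∧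
      MGDivisible W μ ∧ MGIrreducible W μ ∧ ∃ a b, N < μ a b := by
    intro N
    obtain ⟨μ, h1, _, _, h4, h5, h6⟩ := hcon N
    exact ⟨μ, h1, h4, h5, h6⟩
  choose f hsym hdiv hirr hbig using key
  -- total weight of a multigraph
  set T : (β → β → ℕ) → ℕ := fun μ => ∑ p : β × β, μ p.1 p.2 with hT
  -- recursive sequence of bounds
  set s : ℕ → ℕ := fun n => Nat.rec 0 (fun _ acc => acc + T (f acc)) n with hs
  have hs0 : s 0 = 0 := rfl
  have hssucc : ∀ n, s (n + 1) = s n + T (f (s n)) := fun n => rfl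
  have hmono : Monotone s := monotone_nat_of_le_succ fun n => by
    rw [hssucc]; exact Nat.le_add_right _ _
  -- every single entry is at most the total weight
  have hentry : ∀ μ : β → β → ℕ, ∀ a b, μ a b ≤ T μ := by
    intro μ a b
    exact Finset.single_le_sum (f := fun p : β × β => μ p.1 p.2)
      (fun p _ => Nat.zero_le _) (Finset.mem_univ (a, b))
  -- Dickson's lemma
  have hpwo : (Set.univ : Set (β × β → ℕ)).IsPWO :=
    Set.isPWO_of_wellQuasiOrderedLE _
  obtain ⟨m, n, hmn, hle⟩ :=
    Set.PartiallyWellOrderedOn.exists_lt hpwo (f := fun k (p : β × β) => f (s k) p.1 p.2) (fun _ => Set.mem_univ _)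
  have hle' : ∀ a b, f (s m) a b ≤ f (s n) a b := fun a b => hle (a, b)
  -- nonzero
  obtain ⟨a₀, b₀, hab₀⟩ := hbig (s m)
  have hne : ∃ a b, f (s m) a b ≠ 0 := ⟨a₀, b₀, by omega⟩
  have heq : f (s m) = f (s n) :=
    hirr (s n) (f (s m)) hle' (hsym (s m)) (hdiv (s m)) hne
  -- contradiction: f (s n) has an entry bigger than s n ≥ total weight of f (s m)
  obtain ⟨a, b, hab⟩ := hbig (s n)
  have h1 : f (s n) a b ≤ T (f (s m)) := heq ▸ hentry (f (s m)) a b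
  have h2 : T (f (s m)) ≤ s n := by
    have := hssucc m
    have h3 : s (m + 1) ≤ s n := hmono hmn
    omega
  omega
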